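/- Let d, q ≥ 1. For every continuous map f : Δ_d^{(d+1)(q-1)} → ℝ^d there exists ε > 0 such that for every continuous map f̃ : Δ_d^{(d+1)(q-1)} → ℝ^d with sup_{x ∈ Δ_d^{(d+1)(q-1)}} ‖f̃(x) − f(x)‖ < ε (Euclidean norm on ℝ^d), every Tverberg partition of f̃ is also a Tverberg partition of f. -/

import Mathlib

open scoped BigOperators

noncomputable section

/-- Euclidean space `ℝ^d`. -/
abbrev Euc (d : ℕ) : Type := EuclideanSpace ℝ (Fin d)

/-- The standard `N`-simplex `Δ^N ⊆ ℝ^{N+1}`. -/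
def stdSimp (N : ℕ) : Set (Fin (N+1) → ℝ) :=
  {x | (∀ i, 0 ≤ x i) ∧ ∑ i, x i = 1}

/-- The face `σ_S` of `Δ^N` spanned by the vertices in `S`. -/
def simpFace {N : ℕ} (S : Finset (Fin (N+1))) : Set (Fin (N+1) → ℝ) :=
  {x ∈ stdSimp N | ∀ i ∉ S, x i = 0}

/-- The `k`-skeleton `Δ_k^N` of the standard `N`-simplex. -/
def skel (N k : ℕ) : Set (Fin (N+1) → ℝ) :=
  {x ∈ stdSimp N | {i | x i ≠ 0}.ncard ≤ k + 1}

/-- A Tverberg partition for (the relevant restriction of) `f`: a set of `q`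
pairwise disjoint nonempty vertex subsets whose faces have images with a common point. -/
def IsTverbergPartition (q : ℕ) {N d : ℕ}
    (f : (Fin (N+1) → ℝ) → Euc d) (P : Finset (Finset (Fin (N+1)))) : Prop :=
  P.card = q ∧ (∀ S ∈ P, S.Nonempty) ∧
  (∀ S ∈ P, ∀ T ∈ P, S ≠ T → Disjoint S T) ∧
  (⋂ S ∈ P, f '' simpFace S).Nonempty

/-- If finitely many compact sets in a proper metric space have empty intersection,
then their `ε`-thickenings also have empty intersection for some `ε > 0`. -/
lemma gap_lemma {E : Type*} [MetricSpace E] [ProperSpace E] {α : Type*}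
    (P : Finset α) (K : α → Set E) (hK : ∀ S ∈ P, IsCompact (K S))
    (hP : P.Nonempty)
    (h : (⋂ S ∈ P, K S) = ∅) :
    ∃ ε > (0:ℝ), (⋂ S ∈ P, Metric.thickening ε (K S)) = ∅ := by
  obtain ⟨S₀, hS₀⟩ := hP
  set L := Metric.cthickening 1 (K S₀) with hL
  have hLc : IsCompact L := by
    refine Metric.isCompact_of_isClosed_isBounded Metric.isClosed_cthickening ?_
    exact ((hK S₀ hS₀).isBounded).cthickening
  set Z : ℕ → Set E := fun n => ⋂ S ∈ P, Metric.cthickening (1/(n+1)) (K S) with hZ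
  have hZclosed : ∀ n, IsClosed (Z n) := fun n =>
    isClosed_biInter fun S _ => Metric.isClosed_cthickening
  have hempty : L ∩ ⋂ n, Z n = ∅ := by
    rw [Set.eq_empty_iff_forall_notMem]
    rintro y ⟨-, hy⟩
    simp only [Set.mem_iInter, hZ] at hy
    have : y ∈ ⋂ S ∈ P, K S := by
      simp only [Set.mem_iInter]
      intro S hS
      have hyS : ∀ n : ℕ, y ∈ Metric.cthickening (1/(n+1)) (K S) := fun n => hy n S hS
      have : y ∈ closure (K S) := by
        have : EMetric.infEdist y (K S) = 0 := by
          refine le_antisymm ?_ (zero_le)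
          refine ENNReal.le_of_forall_pos_le_add fun δ hδ _ => ?_
          obtain ⟨n, hn⟩ := exists_nat_one_div_lt (by exact_mod_cast hδ : (0:ℝ) < δ)
          calc EMetric.infEdist y (K S) ≤ ENNReal.ofReal (1/(n+1)) :=
                (Metric.mem_cthickening_iff ..).mp ?_
            _ ≤ 0 + δ := by
                rw [zero_add]
                refine le_trans (ENNReal.ofReal_le_ofReal hn.le) ?_
                simp [ENNReal.ofReal_coe_nnreal]
          · exact hyS n
        exact Metric.mem_closure_iff_infEDist_zero.mpr this
      rwa [(hK S hS).isClosed.closure_eq] at this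
    rw [h] at this
    exact this
  obtain ⟨t, ht⟩ := hLc.elim_finite_subfamily_closed Z hZclosed hempty
  set m : ℕ := (t.sup id) with hm
  have hsub : Z m ⊆ ⋂ n ∈ t, Z n := by
    intro y hy
    simp only [Set.mem_iInter]
    intro n hn
    simp only [hZ, Set.mem_iInter] at hy ⊢
    intro S hS
    refine Metric.cthickening_mono ?_ (K S) (hy S hS)
    apply one_div_le_one_div_of_le
    · positivity
    · have : n ≤ m := Finset.le_sup (f := id) hn
      exact_mod_cast Nat.succ_le_succ this
  refine ⟨1/(m+1), by positivity, ?_⟩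
  rw [Set.eq_empty_iff_forall_notMem]
  intro y hy
  simp only [Set.mem_iInter] at hy
  have h1m : (1:ℝ)/(m+1) ≤ 1 := by
    rw [div_le_one (by positivity)]
    have : (0:ℝ) ≤ m := Nat.cast_nonneg m
    linarith
  have hyL : y ∈ L := by
    refine Metric.cthickening_mono h1m (K S₀) ?_
    exact Metric.thickening_subset_cthickening _ _ (hy S₀ hS₀)
  have hyZ : y ∈ Z m := by
    simp only [hZ, Set.mem_iInter]
    intro S hS
    exact Metric.thickening_subset_cthickening _ _ (hy S hS)
  exact Set.eq_empty_iff_forall_notMem.mp ht y ⟨hyL, hsub hyZ⟩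

/-- A face with at most `k+1` vertices lies in the `k`-skeleton. -/
lemma simpFace_subset_skel {N k : ℕ} {S : Finset (Fin (N+1))} (hS : S.card ≤ k + 1) :
    simpFace S ⊆ skel N k := by
  rintro x ⟨hx, hx0⟩
  refine ⟨hx, ?_⟩
  have hsub : {i | x i ≠ 0} ⊆ (S : Set (Fin (N+1))) := by
    intro i hi
    by_contra hiS
    exact hi (hx0 i (by simpa using hiS))
  calc {i | x i ≠ 0}.ncard ≤ (S : Set (Fin (N+1))).ncard :=
        Set.ncard_le_ncard hsub S.finite_toSet
    _ = S.card := Set.ncard_coe_finset S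
    _ ≤ k + 1 := hS

/-- Faces of the standard simplex are compact. -/
lemma isCompact_simpFace {N : ℕ} (S : Finset (Fin (N+1))) : IsCompact (simpFace S) := by
  have hclosed : IsClosed (simpFace S) := by
    have heq : simpFace S =
        (⋂ i, {x : Fin (N+1) → ℝ | 0 ≤ x i}) ∩ {x | ∑ i, x i = 1} ∩
        ⋂ i ∈ (Sᶜ : Finset (Fin (N+1))), {x | x i = 0} := by
      ext x
      simp only [simpFace, stdSimp, Set.mem_setOf_eq, Set.mem_inter_iff, Set.mem_iInter,
        Finset.mem_compl]
    rw [heq]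
    exact ((isClosed_iInter fun i =>
      isClosed_le continuous_const (continuous_apply i)).inter
      (isClosed_eq (by continuity) continuous_const)).inter
      (isClosed_biInter fun i _ => isClosed_eq (continuous_apply i) continuous_const)
  have hsub : simpFace S ⊆ Set.Icc (0 : Fin (N+1) → ℝ) 1 := by
    rintro x ⟨⟨hx0, hx1⟩, -⟩
    constructor
    · intro i; exact hx0 i
    · intro i
      calc x i ≤ ∑ j, x j := Finset.single_le_sum (fun j _ => hx0 j) (Finset.mem_univ i)
        _ = 1 := hx1
  exact isCompact_Icc.of_isClosed_subset hclosed hsub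

/-- Approximation lemma: small perturbations of a map on the `d`-skeleton
create no new Tverberg partitions. -/
theorem tverberg_partition_stable (d q : ℕ) (hd : 1 ≤ d) (hq : 1 ≤ q)
    (f : (Fin ((d+1)*(q-1)+1) → ℝ) → Euc d)
    (hf : ContinuousOn f (skel ((d+1)*(q-1)) d)) :
    ∃ ε > (0:ℝ), ∀ g : (Fin ((d+1)*(q-1)+1) → ℝ) → Euc d,
      ContinuousOn g (skel ((d+1)*(q-1)) d) →
      (∀ x ∈ skel ((d+1)*(q-1)) d, ‖g x - f x‖ < ε) →
      ∀ P : Finset (Finset (Fin ((d+1)*(q-1)+1))),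
        (IsTverbergPartition q g P ∧ ∀ S ∈ P, S.card ≤ d + 1) →
        (IsTverbergPartition q f P ∧ ∀ S ∈ P, S.card ≤ d + 1) := by
  classical
  have key : ∀ P : Finset (Finset (Fin ((d+1)*(q-1)+1))), ∃ ε > (0:ℝ),
      (P.Nonempty ∧ (∀ S ∈ P, S.card ≤ d + 1) ∧ (⋂ S ∈ P, f '' simpFace S) = ∅) →
      (⋂ S ∈ P, Metric.thickening ε (f '' simpFace S)) = ∅ := by
    intro P
    by_cases hP : P.Nonempty ∧ (∀ S ∈ P, S.card ≤ d + 1) ∧ (⋂ S ∈ P, f '' simpFace S) = ∅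
    · obtain ⟨hPne, hPcard, hPempty⟩ := hP
      obtain ⟨ε, hεpos, hεempty⟩ := gap_lemma P (fun S => f '' simpFace S)
        (fun S hS => (isCompact_simpFace S).image_of_continuousOn
          (hf.mono (simpFace_subset_skel (hPcard S hS)))) hPne hPempty
      exact ⟨ε, hεpos, fun _ => hεempty⟩
    · exact ⟨1, one_pos, fun hc => absurd hc hP⟩
  choose εf hεfpos hεfempty using key
  have huniv : (Finset.univ : Finset (Finset (Finset (Fin ((d+1)*(q-1)+1))))).Nonempty :=
    ⟨∅, Finset.mem_univ _⟩
  refine ⟨Finset.univ.inf' huniv εf,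
    (Finset.lt_inf'_iff huniv).mpr fun P _ => hεfpos P, ?_⟩
  intro g hg hclose P ⟨⟨hPq, hPne, hPdisj, hPint⟩, hPcard⟩
  refine ⟨⟨hPq, hPne, hPdisj, ?_⟩, hPcard⟩
  by_contra hempty
  rw [Set.not_nonempty_iff_eq_empty] at hempty
  have hPnonempty : P.Nonempty := by
    rw [← Finset.card_pos, hPq]; exact hq
  have hεle : Finset.univ.inf' huniv εf ≤ εf P := Finset.inf'_le εf (Finset.mem_univ P)
  obtain ⟨y, hy⟩ := hPint
  simp only [Set.mem_iInter] at hy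
  have hmem : y ∈ ⋂ S ∈ P, Metric.thickening (εf P) (f '' simpFace S) := by
    simp only [Set.mem_iInter]
    intro S hS
    obtain ⟨x, hxS, hxy⟩ := hy S hS
    rw [Metric.mem_thickening_iff]
    refine ⟨f x, Set.mem_image_of_mem f hxS, ?_⟩
    have hxskel : x ∈ skel ((d+1)*(q-1)) d := simpFace_subset_skel (hPcard S hS) hxS
    calc dist y (f x) = ‖g x - f x‖ := by rw [← hxy, dist_eq_norm]
      _ < Finset.univ.inf' huniv εf := hclose x hxskel
      _ ≤ εf P := hεle
  rw [hεfempty P ⟨hPnonempty, hPcard, hempty⟩] at hmem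
  exact hmem
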